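/- For every splitting filtration 𝔖 of order N there exists a unique reduced splitting filtration 𝔖* of order N with the same branch set, B(𝔖*) = B(𝔖). Consequently, the reduced splitting filtrations form a complete set of representatives for the equivalence relation 𝔖 ≃ 𝔖′ ⟺ B(𝔖) = B(𝔖′) on S_N. -/

import Mathlib

open Finset MeasureTheory

noncomputable section

structure SplittingFiltration (N : ℕ) where
  L : ℕ
  π : ℕ → Finpartition (Finset.univ : Finset (Fin N))
  top_eq : (π 0).parts = {Finset.univ}
  strict : ∀ ℓ < L, π (ℓ + 1) < π ℓ
  bot_eq : ∀ ℓ, L ≤ ℓ → π ℓ = ⊥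

namespace SplittingFiltration

variable {N : ℕ} (S : SplittingFiltration N)

/-- The branch set: non-singleton blocks appearing in levels `0,…,L−1`. -/
def branches : Finset (Finset (Fin N)) :=
  ((Finset.range S.L).biUnion fun ℓ => (S.π ℓ).parts).filter fun b => 1 < b.card

/-- The branch depth: the largest level index `ℓ < L` whose partition contains `b`. -/
def depth (b : Finset (Fin N)) : ℕ := sSup {ℓ | ℓ < S.L ∧ b ∈ (S.π ℓ).parts}

/-- The branch degree: the number of blocks of the next level contained in `b`. -/
def deg (b : Finset (Fin N)) : ℕ := ((S.π (S.depth b + 1)).parts.filter fun c => c ⊆ b).card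

/-- The multiplicity `M_{𝔖,q}`, a product of falling factorials `(q−1)_{deg−1}`. -/
def mult (q : ℕ) : ℕ := ∏ b ∈ S.branches, (q - 1).descFactorial (S.deg b - 1)

/-- A splitting filtration is reduced if each branch lies in exactly one level. -/
def Reduced : Prop := ∀ b ∈ S.branches, ∃! ℓ, ℓ < S.L ∧ b ∈ (S.π ℓ).parts

end SplittingFiltration

/-- The rank of a partition of `[N]`: `N` minus the number of blocks. -/
def prank {N : ℕ} (P : Finpartition (Finset.univ : Finset (Fin N))) : ℕ :=
  N - P.parts.card

/-- The set of ordered pairs `(i,j)` with `i < j`. -/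
def pairFinset (N : ℕ) : Finset (Fin N × Fin N) := Finset.univ.filter fun p => p.1 < p.2

/-- `Σ_{i<j, i,j ∈ b} s i j`. -/
def pairSum {N : ℕ} (s : Fin N → Fin N → ℂ) (b : Finset (Fin N)) : ℂ :=
  ∑ p ∈ (pairFinset N).filter (fun p => p.1 ∈ b ∧ p.2 ∈ b), s p.1 p.2

/-- Branch exponent `e_b(s) = (#b − 1) + Σ_{i<j ∈ b} s_{ij}`. -/
def branchExp {N : ℕ} (s : Fin N → Fin N → ℂ) (b : Finset (Fin N)) : ℂ :=
  ((b.card : ℂ) - 1) + pairSum s b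

/-- Level exponent `E_{𝔖,ℓ}(s) = Σ_{b ∈ B(𝔖) ∩ π_ℓ} e_b(s)`. -/
def levelExp {N : ℕ} (S : SplittingFiltration N) (s : Fin N → Fin N → ℂ) (ℓ : ℕ) : ℂ :=
  ∑ b ∈ (S.π ℓ).parts.filter (fun b => 1 < b.card), branchExp s b

/-- `m_ℓ = −1 + n_0 + ⋯ + n_{ℓ−1}`. -/
def mval (n : ℕ → ℕ) (ℓ : ℕ) : ℤ := (∑ t ∈ Finset.range ℓ, (n t : ℤ)) - 1

/-- Two indices lie in a common block of the partition `P`. -/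
def SamePart {N : ℕ} (P : Finpartition (Finset.univ : Finset (Fin N))) (i j : Fin N) : Prop :=
  ∃ b ∈ P.parts, i ∈ b ∧ j ∈ b

/-- `x ∈ T(𝔖, n)`: the level pair associated to `x` is `(𝔖, n)`. -/
def InT {K : Type*} [NormedField K] (q : ℕ) {N : ℕ} (S : SplittingFiltration N)
    (n : ℕ → ℕ) (x : Fin N → K) : Prop :=
  (∀ i, ‖x i‖ ≤ 1) ∧
  (∀ ℓ < S.L, ∀ i j : Fin N,
    SamePart (S.π ℓ) i j ↔ ‖x i - x j‖ ≤ (q : ℝ) ^ (-(mval n (ℓ + 1)))) ∧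
  (∀ i j : Fin N, i ≠ j → ∃ ℓ < S.L, ‖x i - x j‖ = (q : ℝ) ^ (-(mval n (ℓ + 1)))) ∧
  (∀ ℓ < S.L, ∃ i j : Fin N, i ≠ j ∧ ‖x i - x j‖ = (q : ℝ) ^ (-(mval n (ℓ + 1))))

lemma pairFinset_nonempty {N : ℕ} (hN : 2 ≤ N) : (pairFinset N).Nonempty := by
  refine ⟨(⟨0, by omega⟩, ⟨1, by omega⟩), ?_⟩
  simp only [pairFinset, Finset.mem_filter, Finset.mem_univ, true_and]
  exact Fin.mk_lt_mk.mpr (by omega)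

/-- The diameter `max_{i<j} ‖x_i − x_j‖`. -/
def maxDist {K : Type*} [NormedField K] {N : ℕ} (hN : 2 ≤ N) (x : Fin N → K) : ℝ :=
  (pairFinset N).sup' (pairFinset_nonempty hN) fun p => ‖x p.1 - x p.2‖

/-- The minimum distance `min_{i<j} ‖x_i − x_j‖`. -/
def minDist {K : Type*} [NormedField K] {N : ℕ} (hN : 2 ≤ N) (x : Fin N → K) : ℝ :=
  (pairFinset N).inf' (pairFinset_nonempty hN) fun p => ‖x p.1 - x p.2‖

section Reduction

namespace SplittingFiltration

variable {N : ℕ}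

lemma pi_antitone (S : SplittingFiltration N) : ∀ {ℓ m : ℕ}, ℓ ≤ m → S.π m ≤ S.π ℓ := by
  intro ℓ m h
  induction m with
  | zero => exact Nat.le_zero.mp h ▸ le_rfl
  | succ m ih =>
    rcases Nat.lt_or_ge m S.L with hm | hm
    · rcases Nat.eq_or_lt_of_le h with rfl | h'
      · exact le_rfl
      · exact (S.strict m hm).le.trans (ih (Nat.lt_succ_iff.mp h'))
    · rw [S.bot_eq (m + 1) (by omega)]; exact bot_le

lemma mem_branches_iff {S : SplittingFiltration N} {b : Finset (Fin N)} :
    b ∈ S.branches ↔ (∃ ℓ, ℓ < S.L ∧ b ∈ (S.π ℓ).parts) ∧ 1 < b.card := by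
  simp [branches, Finset.mem_filter, Finset.mem_biUnion, Finset.mem_range]

lemma one_lt_card_of_mem_branches {S : SplittingFiltration N} {b : Finset (Fin N)}
    (hb : b ∈ S.branches) : 1 < b.card := (mem_branches_iff.mp hb).2

lemma L_pos (S : SplittingFiltration N) (hN : 2 ≤ N) : 0 < S.L := by
  by_contra h
  have h0 : S.π 0 = ⊥ := S.bot_eq 0 (by omega)
  have huniv : (Finset.univ : Finset (Fin N)) ∈ (S.π 0).parts := by
    rw [S.top_eq]; exact Finset.mem_singleton_self _
  rw [h0, Finpartition.mem_bot_iff] at huniv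
  obtain ⟨a, -, ha⟩ := huniv
  have := congrArg Finset.card ha
  simp [Finset.card_univ] at this
  omega

lemma univ_mem_branches (S : SplittingFiltration N) (hN : 2 ≤ N) :
    (Finset.univ : Finset (Fin N)) ∈ S.branches := by
  rw [mem_branches_iff]
  refine ⟨⟨0, S.L_pos hN, ?_⟩, ?_⟩
  · rw [S.top_eq]; exact Finset.mem_singleton_self _
  · simpa [Finset.card_univ] using (by omega : 1 < N)

lemma subset_or_disjoint (S : SplittingFiltration N) {b c : Finset (Fin N)}
    {ℓ m : ℕ} (hlm : ℓ ≤ m) (hb : b ∈ (S.π ℓ).parts) (hc : c ∈ (S.π m).parts)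
    (hd : ¬ Disjoint b c) : c ⊆ b := by
  obtain ⟨b', hb', hcb'⟩ := S.pi_antitone hlm hc
  obtain ⟨x, hxb, hxc⟩ := Finset.not_disjoint_iff.mp hd
  have : b = b' := (S.π ℓ).eq_of_mem_parts hb hb' hxb (hcb' hxc)
  exact this ▸ hcb'

lemma branches_chain (S : SplittingFiltration N) {b c : Finset (Fin N)}
    (hb : b ∈ S.branches) (hc : c ∈ S.branches) (hd : ¬ Disjoint b c) :
    b ⊆ c ∨ c ⊆ b := by
  obtain ⟨⟨ℓ, hℓ, hbp⟩, -⟩ := mem_branches_iff.mp hb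
  obtain ⟨⟨m, hm, hcp⟩, -⟩ := mem_branches_iff.mp hc
  rcases le_total ℓ m with h | h
  · exact Or.inr (S.subset_or_disjoint h hbp hcp hd)
  · exact Or.inl (S.subset_or_disjoint h hcp hbp fun hdd => hd hdd.symm)

/-- The depth of a branch: number of branches strictly containing it. -/
def bdepth (S : SplittingFiltration N) (b : Finset (Fin N)) : ℕ :=
  (S.branches.filter fun c => b ⊂ c).card

lemma bdepth_lt_of_ssubset (S : SplittingFiltration N) {b c : Finset (Fin N)}
    (hc : c ∈ S.branches) (h : b ⊂ c) : S.bdepth c < S.bdepth b := by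
  apply Finset.card_lt_card
  rw [Finset.ssubset_iff_subset_ne]
  constructor
  · intro e he
    simp only [Finset.mem_filter] at he ⊢
    exact ⟨he.1, h.trans he.2⟩
  · intro heq
    have hc' : c ∈ S.branches.filter fun e => b ⊂ e := by
      simp only [Finset.mem_filter]; exact ⟨hc, h⟩
    rw [← heq, Finset.mem_filter] at hc'
    exact (Finset.ssubset_iff_subset_ne.mp hc'.2).2 rfl

lemma eq_of_bdepth_eq (S : SplittingFiltration N) {b c : Finset (Fin N)} {i : Fin N}
    (hb : b ∈ S.branches) (hc : c ∈ S.branches)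
    (hib : i ∈ b) (hic : i ∈ c) (h : S.bdepth b = S.bdepth c) : b = c := by
  have hd : ¬ Disjoint b c := Finset.not_disjoint_iff.mpr ⟨i, hib, hic⟩
  rcases S.branches_chain hb hc hd with hs | hs
  · rcases hs.ssubset_or_eq with hss | heq
    · exact absurd h (by have := S.bdepth_lt_of_ssubset hc hss; omega)
    · exact heq
  · rcases hs.ssubset_or_eq with hss | heq
    · exact absurd h (by have := S.bdepth_lt_of_ssubset hb hss; omega)
    · exact heq.symm

lemma bdepth_univ (S : SplittingFiltration N) : S.bdepth (Finset.univ : Finset (Fin N)) = 0 := by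
  rw [bdepth, Finset.card_eq_zero, Finset.filter_eq_empty_iff]
  intro c _
  intro h
  have hss := Finset.ssubset_iff_subset_ne.mp h
  exact hss.2 (((Finset.subset_univ c).antisymm hss.1).symm)

lemma eq_univ_of_bdepth_eq_zero (S : SplittingFiltration N) (hN : 2 ≤ N) {b : Finset (Fin N)}
    (hb : b ∈ S.branches) (h : S.bdepth b = 0) : b = Finset.univ := by
  by_contra hne
  have hmem : Finset.univ ∈ S.branches.filter fun c => b ⊂ c := by
    simp only [Finset.mem_filter]
    exact ⟨S.univ_mem_branches hN, Finset.ssubset_univ_iff.mpr hne⟩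
  have := Finset.card_pos.mpr ⟨_, hmem⟩
  rw [bdepth] at h
  omega

lemma exists_min_superset (S : SplittingFiltration N) {b : Finset (Fin N)} {k : ℕ}
    (hb : b ∈ S.branches) (h : S.bdepth b = k + 1) :
    ∃ c ∈ S.branches, b ⊂ c ∧ S.bdepth c = k := by
  have hFne : (S.branches.filter fun c => b ⊂ c).Nonempty := by
    rw [← Finset.card_pos, ← bdepth, h]; omega
  obtain ⟨c, hc⟩ := Finset.exists_minimal hFne
  have hcF : c ∈ S.branches.filter fun c => b ⊂ c := hc.prop
  have hmin : ∀ e ∈ S.branches.filter (fun c => b ⊂ c), ¬ e < c :=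
    fun e he hec => hc.not_prop_of_lt hec he
  have hcF' := hcF
  simp only [Finset.mem_filter] at hcF'
  refine ⟨c, hcF'.1, hcF'.2, ?_⟩
  have key : (S.branches.filter fun e => c ⊂ e) = (S.branches.filter fun e => b ⊂ e).erase c := by
    ext e
    simp only [Finset.mem_erase, Finset.mem_filter]
    constructor
    · rintro ⟨he, hce⟩
      exact ⟨fun heq => (Finset.ssubset_iff_subset_ne.mp (heq ▸ hce)).2 rfl, he, hcF'.2.trans hce⟩
    · rintro ⟨hne, he, hbe⟩
      refine ⟨he, ?_⟩
      have hd : ¬ Disjoint c e := by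
        obtain ⟨x, hx⟩ : b.Nonempty :=
          Finset.card_pos.mp (by have := one_lt_card_of_mem_branches hb; omega)
        exact Finset.not_disjoint_iff.mpr ⟨x, hcF'.2.subset hx, hbe.subset hx⟩
      rcases S.branches_chain hcF'.1 he hd with hs | hs
      · exact Finset.ssubset_iff_subset_ne.mpr ⟨hs, fun heq => hne heq.symm⟩
      · exfalso
        have hec : e ⊂ c := Finset.ssubset_iff_subset_ne.mpr ⟨hs, hne⟩
        exact hmin e (Finset.mem_filter.mpr ⟨he, hbe⟩) hec
  rw [bdepth, key, Finset.card_erase_of_mem hcF, ← bdepth, h]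
  omega

lemma exists_superset_bdepth (S : SplittingFiltration N) :
    ∀ (n j : ℕ) (b : Finset (Fin N)), b ∈ S.branches → S.bdepth b = n → j ≤ n →
      ∃ c ∈ S.branches, b ⊆ c ∧ S.bdepth c = j := by
  intro n
  induction n with
  | zero => exact fun j b hb hd hj => ⟨b, hb, subset_rfl, by omega⟩
  | succ n ih =>
    intro j b hb hd hj
    rcases Nat.eq_or_lt_of_le hj with rfl | hj'
    · exact ⟨b, hb, subset_rfl, hd⟩
    · obtain ⟨c, hc, hbc, hdc⟩ := S.exists_min_superset hb hd
      obtain ⟨e, he, hce, hde⟩ := ih j c hc hdc (by omega)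
      exact ⟨e, he, hbc.subset.trans hce, hde⟩

/-- The parts of the canonical reduced filtration at level `ℓ`. -/
def rparts (S : SplittingFiltration N) (ℓ : ℕ) : Finset (Finset (Fin N)) :=
  (S.branches.filter fun b => S.bdepth b = ℓ) ∪
    ((Finset.univ.filter fun i : Fin N => ∀ b ∈ S.branches, S.bdepth b = ℓ → i ∉ b).image
      fun i => {i})

lemma mem_rparts {S : SplittingFiltration N} {ℓ : ℕ} {p : Finset (Fin N)} :
    p ∈ S.rparts ℓ ↔
      (p ∈ S.branches ∧ S.bdepth p = ℓ) ∨
        ∃ i : Fin N, (∀ b ∈ S.branches, S.bdepth b = ℓ → i ∉ b) ∧ p = {i} := by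
  simp only [rparts, Finset.mem_union, Finset.mem_filter, Finset.mem_image, Finset.mem_univ,
    true_and]
  constructor
  · rintro (h | ⟨i, hi, rfl⟩)
    · exact Or.inl h
    · exact Or.inr ⟨i, hi, rfl⟩
  · rintro (h | ⟨i, hi, rfl⟩)
    · exact Or.inl h
    · exact Or.inr ⟨i, hi, rfl⟩

/-- The canonical reduced partition at level `ℓ`. -/
def rpi (S : SplittingFiltration N) (ℓ : ℕ) :
    Finpartition (Finset.univ : Finset (Fin N)) where
  parts := S.rparts ℓ
  supIndep := by
    rw [Finset.supIndep_iff_pairwiseDisjoint]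
    intro p hp q hq hpq
    simp only [Function.onFun, id] at *
    by_contra hnd
    obtain ⟨x, hxp, hxq⟩ := Finset.not_disjoint_iff.mp hnd
    rcases mem_rparts.mp hp with ⟨hpb, hpd⟩ | ⟨i, hi, rfl⟩ <;>
      rcases mem_rparts.mp hq with ⟨hqb, hqd⟩ | ⟨j, hj, hqj⟩
    · exact hpq (S.eq_of_bdepth_eq hpb hqb hxp hxq (hpd.trans hqd.symm))
    · subst hqj
      exact hj p hpb hpd (Finset.mem_singleton.mp hxq ▸ hxp)
    · exact hi q hqb hqd (Finset.mem_singleton.mp hxp ▸ hxq)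
    · subst hqj
      have h1 := Finset.mem_singleton.mp hxp
      have h2 := Finset.mem_singleton.mp hxq
      exact hpq (by rw [← h1, ← h2])
  sup_parts := by
    apply Finset.Subset.antisymm
    · intro x hx; exact Finset.mem_univ x
    · intro x hx
      rw [Finset.mem_sup]
      by_cases h : ∃ b ∈ S.branches, S.bdepth b = ℓ ∧ x ∈ b
      · obtain ⟨b, hb, hd, hxb⟩ := h
        exact ⟨b, mem_rparts.mpr (Or.inl ⟨hb, hd⟩), hxb⟩
      · push_neg at h
        exact ⟨{x}, mem_rparts.mpr (Or.inr ⟨x, fun b hb hd => h b hb hd, rfl⟩),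
          Finset.mem_singleton_self x⟩
  bot_notMem := by
    intro h
    rcases mem_rparts.mp h with ⟨hb, -⟩ | ⟨i, -, hi⟩
    · have := one_lt_card_of_mem_branches hb
      rw [Finset.bot_eq_empty, Finset.card_empty] at this
      omega
    · exact (Finset.singleton_ne_empty i) hi.symm

lemma rpi_parts (S : SplittingFiltration N) (ℓ : ℕ) : (S.rpi ℓ).parts = S.rparts ℓ := rfl

/-- The maximal branch depth. -/
def bD (S : SplittingFiltration N) : ℕ := S.branches.sup S.bdepth

lemma bdepth_le_bD {S : SplittingFiltration N} {b : Finset (Fin N)} (hb : b ∈ S.branches) :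
    S.bdepth b ≤ S.bD := Finset.le_sup hb

lemma exists_bdepth_eq (S : SplittingFiltration N) (hN : 2 ≤ N) {ℓ : ℕ} (h : ℓ ≤ S.bD) :
    ∃ b ∈ S.branches, S.bdepth b = ℓ := by
  obtain ⟨b0, hb0, hb0d⟩ :=
    Finset.exists_mem_eq_sup S.branches ⟨_, S.univ_mem_branches hN⟩ S.bdepth
  obtain ⟨c, hc, -, hcd⟩ := S.exists_superset_bdepth (S.bdepth b0) ℓ b0 hb0 rfl
    (by rw [← hb0d]; exact h)
  exact ⟨c, hc, hcd⟩

lemma rpi_eq_bot (S : SplittingFiltration N) {ℓ : ℕ} (h : S.bD < ℓ) : S.rpi ℓ = ⊥ := by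
  apply Finpartition.ext
  rw [rpi_parts, Finpartition.parts_bot]
  ext p
  rw [Finset.mem_map]
  constructor
  · intro hp
    rcases mem_rparts.mp hp with ⟨hb, hd⟩ | ⟨i, -, rfl⟩
    · exact absurd (hd ▸ bdepth_le_bD hb) (by omega)
    · exact ⟨i, Finset.mem_univ i, rfl⟩
  · rintro ⟨a, -, rfl⟩
    exact mem_rparts.mpr (Or.inr ⟨a, fun b hb hd => absurd (hd ▸ bdepth_le_bD hb) (by omega),
      rfl⟩)

lemma rpi_strict (S : SplittingFiltration N) (hN : 2 ≤ N) {ℓ : ℕ} (h : ℓ ≤ S.bD) :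
    S.rpi (ℓ + 1) < S.rpi ℓ := by
  have hle : S.rpi (ℓ + 1) ≤ S.rpi ℓ := by
    intro p hp
    rcases mem_rparts.mp hp with ⟨hpb, hpd⟩ | ⟨i, hi, rfl⟩
    · obtain ⟨c, hc, hbc, hdc⟩ := S.exists_min_superset hpb hpd
      exact ⟨c, mem_rparts.mpr (Or.inl ⟨hc, hdc⟩), hbc.subset⟩
    · obtain ⟨t, ht, hit⟩ := (S.rpi ℓ).exists_mem (Finset.mem_univ i)
      exact ⟨t, ht, Finset.singleton_subset_iff.mpr hit⟩
  obtain ⟨b, hb, hbd⟩ := S.exists_bdepth_eq hN h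
  refine lt_of_le_of_ne hle fun heq => ?_
  have hbmem : b ∈ (S.rpi ℓ).parts := mem_rparts.mpr (Or.inl ⟨hb, hbd⟩)
  rw [← heq] at hbmem
  rcases mem_rparts.mp hbmem with ⟨-, hd⟩ | ⟨i, -, rfl⟩
  · omega
  · have := one_lt_card_of_mem_branches hb
    simp at this

/-- The canonical reduction of a splitting filtration. -/
def Sstar (S : SplittingFiltration N) (hN : 2 ≤ N) : SplittingFiltration N where
  L := S.bD + 1
  π := S.rpi
  top_eq := by
    rw [rpi_parts]
    ext p
    rw [Finset.mem_singleton]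
    constructor
    · intro hp
      rcases mem_rparts.mp hp with ⟨hb, hd⟩ | ⟨i, hi, rfl⟩
      · exact S.eq_univ_of_bdepth_eq_zero hN hb hd
      · exact absurd (Finset.mem_univ i)
          (hi _ (S.univ_mem_branches hN) S.bdepth_univ)
    · rintro rfl
      exact mem_rparts.mpr (Or.inl ⟨S.univ_mem_branches hN, S.bdepth_univ⟩)
  strict := fun ℓ hℓ => S.rpi_strict hN (by omega)
  bot_eq := fun ℓ hℓ => S.rpi_eq_bot (by omega)

lemma branches_Sstar (S : SplittingFiltration N) (hN : 2 ≤ N) :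
    (S.Sstar hN).branches = S.branches := by
  ext b
  rw [mem_branches_iff]
  constructor
  · rintro ⟨⟨ℓ, hℓ, hp⟩, hcard⟩
    rcases mem_rparts.mp hp with ⟨hb, -⟩ | ⟨i, -, rfl⟩
    · exact hb
    · simp at hcard
  · intro hb
    refine ⟨⟨S.bdepth b, ?_, mem_rparts.mpr (Or.inl ⟨hb, rfl⟩)⟩,
      one_lt_card_of_mem_branches hb⟩
    have := bdepth_le_bD hb
    show S.bdepth b < S.bD + 1
    omega

lemma reduced_Sstar (S : SplittingFiltration N) (hN : 2 ≤ N) : (S.Sstar hN).Reduced := by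
  intro b hb
  rw [branches_Sstar] at hb
  refine ⟨S.bdepth b, ⟨?_, mem_rparts.mpr (Or.inl ⟨hb, rfl⟩)⟩, ?_⟩
  · show S.bdepth b < S.bD + 1
    have := bdepth_le_bD hb
    omega
  · rintro ℓ ⟨-, hp⟩
    rcases mem_rparts.mp hp with ⟨-, hd⟩ | ⟨i, -, rfl⟩
    · exact hd.symm
    · have := one_lt_card_of_mem_branches hb
      simp at this

section Uniqueness

variable {S T : SplittingFiltration N}

lemma level_eq (hr : T.Reduced) (hBT : T.branches = S.branches) {m : ℕ} {b : Finset (Fin N)}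
    (hm : m < T.L) (hbp : b ∈ (T.π m).parts) (hcard : 1 < b.card) : S.bdepth b = m := by
  have hbT : b ∈ T.branches := mem_branches_iff.mpr ⟨⟨m, hm, hbp⟩, hcard⟩
  have hbS : b ∈ S.branches := hBT ▸ hbT
  obtain ⟨i, hib⟩ : b.Nonempty := Finset.card_pos.mp (by omega)
  set g : ℕ → Finset (Fin N) := fun ℓ => (T.π ℓ).part i with hg
  have gpart : ∀ ℓ, g ℓ ∈ (T.π ℓ).parts := fun ℓ => (T.π ℓ).part_mem.mpr (Finset.mem_univ i)
  have gmem : ∀ ℓ, i ∈ g ℓ := fun ℓ => (T.π ℓ).mem_part (Finset.mem_univ i)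
  have gm : g m = b := (T.π m).part_eq_of_mem hbp hib
  have gmono : ∀ ℓ ℓ' : ℕ, ℓ ≤ ℓ' → g ℓ' ⊆ g ℓ := by
    intro ℓ ℓ' hle
    obtain ⟨c, hc, hsub⟩ := T.pi_antitone hle (gpart ℓ')
    have : c = g ℓ := (T.π ℓ).eq_of_mem_parts hc (gpart ℓ) (hsub (gmem ℓ')) (gmem ℓ)
    exact this ▸ hsub
  have gne : ∀ ℓ ℓ' : ℕ, ℓ < ℓ' → ℓ' ≤ m → g ℓ ≠ g ℓ' := by
    intro ℓ ℓ' hlt hle heq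
    have hsubb : b ⊆ g ℓ' := gm ▸ gmono ℓ' m hle
    have hcardℓ' : 1 < (g ℓ').card := lt_of_lt_of_le hcard (Finset.card_le_card hsubb)
    have hgT : g ℓ' ∈ T.branches :=
      mem_branches_iff.mpr ⟨⟨ℓ', by omega, gpart ℓ'⟩, hcardℓ'⟩
    obtain ⟨u, -, huniq⟩ := hr _ hgT
    have h1 : ℓ = u := huniq ℓ ⟨by omega, heq ▸ gpart ℓ⟩
    have h2 : ℓ' = u := huniq ℓ' ⟨by omega, gpart ℓ'⟩
    omega
  have hub : m ≤ S.bdepth b := by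
    have hcle := Finset.card_le_card_of_injOn g
      (s := Finset.range m) (t := S.branches.filter fun c => b ⊂ c)
      (fun ℓ hℓ => ?_) (fun ℓ hℓ ℓ' hℓ' heq => ?_)
    · simpa [bdepth] using hcle
    · rw [Finset.mem_coe, Finset.mem_range] at hℓ
      have hsub : b ⊆ g ℓ := gm ▸ gmono ℓ m (by omega)
      have hne : b ≠ g ℓ := fun heq => gne ℓ m hℓ le_rfl (heq.symm.trans gm.symm)
      have hcardℓ : 1 < (g ℓ).card := lt_of_lt_of_le hcard (Finset.card_le_card hsub)
      have hgT : g ℓ ∈ T.branches :=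
        mem_branches_iff.mpr ⟨⟨ℓ, by omega, gpart ℓ⟩, hcardℓ⟩
      exact Finset.mem_filter.mpr ⟨hBT ▸ hgT, Finset.ssubset_iff_subset_ne.mpr ⟨hsub, hne⟩⟩
    · simp only [Finset.coe_range, Set.mem_Iio] at hℓ hℓ'
      by_contra hne
      rcases lt_or_gt_of_ne hne with hlt | hlt
      · exact gne ℓ ℓ' hlt (by omega) heq
      · exact gne ℓ' ℓ hlt (by omega) heq.symm
  have hlb : S.bdepth b ≤ m := by
    classical
    set f : Finset (Fin N) → ℕ :=
      fun c => if h : ∃ ℓ, ℓ < T.L ∧ c ∈ (T.π ℓ).parts then h.choose else 0 with hf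
    have hspec : ∀ c ∈ S.branches.filter fun c => b ⊂ c,
        f c < T.L ∧ c ∈ (T.π (f c)).parts := by
      intro c hc
      rw [Finset.mem_filter] at hc
      have hcT : c ∈ T.branches := hBT ▸ hc.1
      obtain ⟨hex, -⟩ := mem_branches_iff.mp hcT
      simp only [hf, dif_pos hex]
      exact hex.choose_spec
    have hflt : ∀ c ∈ S.branches.filter fun c => b ⊂ c, f c < m := by
      intro c hc
      obtain ⟨hfl, hfp⟩ := hspec c hc
      rw [Finset.mem_filter] at hc
      by_contra hge
      push_neg at hge
      obtain ⟨p, hp, hsub⟩ := T.pi_antitone hge hfp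
      have hicp : i ∈ c := hc.2.subset hib
      have : p = b := (T.π m).eq_of_mem_parts hp hbp (hsub hicp) hib
      exact (Finset.ssubset_iff_subset_ne.mp hc.2).2
        (Finset.Subset.antisymm (Finset.ssubset_iff_subset_ne.mp hc.2).1 (this ▸ hsub))
    have hcle := Finset.card_le_card_of_injOn f
      (s := S.branches.filter fun c => b ⊂ c) (t := Finset.range m)
      (fun c hc => Finset.mem_range.mpr (hflt c hc)) ?_
    · simpa [bdepth] using hcle
    · intro c hc c' hc' heq
      have h1 := hspec c hc
      have h2 := hspec c' hc'
      rw [Finset.mem_coe, Finset.mem_filter] at hc hc'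
      exact (T.π (f c)).eq_of_mem_parts h1.2 (heq ▸ h2.2) (hc.2.subset hib) (hc'.2.subset hib)
  omega

lemma mem_level (hr : T.Reduced) (hBT : T.branches = S.branches) {b : Finset (Fin N)}
    (hb : b ∈ S.branches) :
    S.bdepth b < T.L ∧ b ∈ (T.π (S.bdepth b)).parts := by
  have hbT : b ∈ T.branches := hBT ▸ hb
  obtain ⟨⟨m, hm, hp⟩, hcard⟩ := mem_branches_iff.mp hbT
  have := level_eq hr hBT hm hp hcard
  rw [this]
  exact ⟨hm, hp⟩

lemma L_eq (hN : 2 ≤ N) (hr : T.Reduced) (hBT : T.branches = S.branches) :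
    T.L = S.bD + 1 := by
  have h1 : S.bD + 1 ≤ T.L := by
    obtain ⟨b, hb, hbd⟩ := S.exists_bdepth_eq hN (le_refl S.bD)
    have := (mem_level hr hBT hb).1
    omega
  have hL1 : 0 < T.L := T.L_pos hN
  set m := T.L - 1 with hmdef
  have hm : m < T.L := by omega
  have hsm : T.π (m + 1) < T.π m := T.strict m hm
  have hbot : T.π (m + 1) = ⊥ := T.bot_eq _ (by omega)
  rw [hbot] at hsm
  have hne : T.π m ≠ ⊥ := hsm.ne'
  have hexists : ∃ p ∈ (T.π m).parts, 1 < p.card := by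
    by_contra h
    push_neg at h
    apply hne
    apply le_antisymm ?_ bot_le
    intro p hp
    have hp1 : p.card = 1 :=
      le_antisymm (h p hp) (Finset.card_pos.mpr ((T.π m).nonempty_of_mem_parts hp))
    obtain ⟨x, rfl⟩ := Finset.card_eq_one.mp hp1
    exact ⟨{x}, Finpartition.mem_bot_iff.mpr ⟨x, Finset.mem_univ x, rfl⟩, le_rfl⟩
  obtain ⟨p, hp, hpc⟩ := hexists
  have hd := level_eq hr hBT hm hp hpc
  have hpS : p ∈ S.branches := hBT ▸ mem_branches_iff.mpr ⟨⟨m, hm, hp⟩, hpc⟩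
  have := bdepth_le_bD hpS
  omega

lemma pi_eq (hN : 2 ≤ N) (hr : T.Reduced) (hBT : T.branches = S.branches) (ℓ : ℕ) :
    T.π ℓ = S.rpi ℓ := by
  rcases Nat.lt_or_ge ℓ T.L with hℓ | hℓ
  · apply Finpartition.ext
    rw [rpi_parts]
    ext p
    constructor
    · intro hp
      by_cases hc : 1 < p.card
      · exact mem_rparts.mpr (Or.inl
          ⟨hBT ▸ mem_branches_iff.mpr ⟨⟨ℓ, hℓ, hp⟩, hc⟩, level_eq hr hBT hℓ hp hc⟩)
      · have hp1 : p.card = 1 :=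
          le_antisymm (by omega) (Finset.card_pos.mpr ((T.π ℓ).nonempty_of_mem_parts hp))
        obtain ⟨x, rfl⟩ := Finset.card_eq_one.mp hp1
        refine mem_rparts.mpr (Or.inr ⟨x, ?_, rfl⟩)
        intro b hb hbd hxb
        obtain ⟨-, hbl⟩ := mem_level hr hBT hb
        rw [hbd] at hbl
        have heq : ({x} : Finset (Fin N)) = b :=
          (T.π ℓ).eq_of_mem_parts hp hbl (Finset.mem_singleton_self x) hxb
        have hcb := one_lt_card_of_mem_branches hb
        rw [← heq] at hcb
        simp at hcb
    · intro hp
      rcases mem_rparts.mp hp with ⟨hb, hd⟩ | ⟨x, hx, rfl⟩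
      · obtain ⟨-, hbl⟩ := mem_level hr hBT hb
        rw [hd] at hbl
        exact hbl
      · have hq := (T.π ℓ).part_mem.mpr (Finset.mem_univ x)
        have hxq := (T.π ℓ).mem_part (Finset.mem_univ x)
        by_cases hqc : 1 < ((T.π ℓ).part x).card
        · have hqS : (T.π ℓ).part x ∈ S.branches :=
            hBT ▸ mem_branches_iff.mpr ⟨⟨ℓ, hℓ, hq⟩, hqc⟩
          exact absurd hxq (hx _ hqS (level_eq hr hBT hℓ hq hqc))
        · have hq1 : ((T.π ℓ).part x).card = 1 :=
            le_antisymm (by omega) (Finset.card_pos.mpr ⟨x, hxq⟩)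
          obtain ⟨y, hy⟩ := Finset.card_eq_one.mp hq1
          have hxy : x = y := by rw [hy] at hxq; exact Finset.mem_singleton.mp hxq
          rw [← hxy] at hy
          rw [← hy]
          exact hq
  · rw [T.bot_eq ℓ hℓ, S.rpi_eq_bot]
    have := L_eq hN hr hBT
    omega

end Uniqueness

lemma ext' {T U : SplittingFiltration N} (h1 : T.L = U.L) (h2 : T.π = U.π) : T = U := by
  cases T; cases U
  simp only at h1 h2
  subst h1; subst h2
  rfl

end SplittingFiltration

end Reduction

/-- every splitting filtration has a unique reduction: a unique reduced
splitting filtration with the same branch set. -/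
theorem exists_unique_reduction (N : ℕ) (hN : 2 ≤ N) (S : SplittingFiltration N) :
    ∃! T : SplittingFiltration N, T.Reduced ∧ T.branches = S.branches := by
  refine ⟨S.Sstar hN, ⟨S.reduced_Sstar hN, S.branches_Sstar hN⟩, ?_⟩
  rintro T ⟨hr, hBT⟩
  exact SplittingFiltration.ext'
    (SplittingFiltration.L_eq hN hr hBT)
    (funext fun ℓ => SplittingFiltration.pi_eq hN hr hBT ℓ)
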